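/- Let G be a forest with n ≥ 1 vertices and let L be a list assignment for G with |L(v)| ≥ 3 for every vertex v. Then G has at least 3^{(n+1)/2} distinct L-colourings. -/
import Mathlib

open SimpleGraph

lemma exists_weak_leaf {V : Type} [Fintype V] [Nonempty V] {G : SimpleGraph V}
    (hG : G.IsAcyclic) : ∃ v : V, ∀ w₁ w₂, G.Adj v w₁ → G.Adj v w₂ → w₁ = w₂ := by
  classical
  by_contra h
  push_neg at h
  have key : ∀ l : ℕ, ∃ (u v : V) (p : G.Walk u v), p.IsPath ∧ p.length = l := by
    intro l
    induction l with
    | zero => exact ⟨Classical.arbitrary V, _, Walk.nil, Walk.IsPath.nil, rfl⟩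
    | succ l ihl =>
      obtain ⟨u, v, p, hp, hl⟩ := ihl
      obtain ⟨w₁, w₂, h1, h2, hne⟩ := h u
      by_cases hmem : ∀ w, G.Adj u w → w ∈ p.support
      · exfalso
        cases p with
        | nil =>
          have e1 := hmem w₁ h1
          simp only [Walk.support_nil, List.mem_singleton] at e1
          exact G.ne_of_adj h1 e1.symm
        | cons ha q =>
          rename_i x
          rw [Walk.cons_isPath_iff] at hp
          obtain ⟨hq, hus⟩ := hp
          obtain ⟨w, hw, hwx⟩ : ∃ w, G.Adj u w ∧ w ≠ x := by
            by_cases hx : w₁ = x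
            · exact ⟨w₂, h2, by rw [← hx]; exact fun e => hne e.symm⟩
            · exact ⟨w₁, h1, hx⟩
          have hwq : w ∈ q.support := by
            have := hmem w hw
            simp only [Walk.support_cons, List.mem_cons] at this
            rcases this with h' | h'
            · exact absurd h'.symm (G.ne_of_adj hw)
            · exact h'
          set r := q.takeUntil w hwq with hr_def
          have hr : r.IsPath := hq.takeUntil hwq
          have hur : u ∉ r.support := fun hu => hus (q.support_takeUntil_subset hwq hu)
          have hcyc : (Walk.cons ha (r.concat hw.symm)).IsCycle := by
            rw [Walk.cons_isCycle_iff]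
            constructor
            · rw [← Walk.isPath_reverse_iff, Walk.reverse_concat]
              rw [Walk.cons_isPath_iff]
              exact ⟨hr.reverse, by simpa using hur⟩
            · rw [Walk.edges_concat]
              intro hmem'
              rw [List.concat_eq_append] at hmem'
              rcases List.mem_append.mp hmem' with h' | h'
              · exact hur (Walk.fst_mem_support_of_mem_edges r h')
              · rw [List.mem_singleton, Sym2.eq_iff] at h'
                rcases h' with ⟨e1, _⟩ | ⟨_, e2⟩
                · exact G.ne_of_adj hw e1
                · exact hwx e2.symm
          exact hG _ hcyc
      · push_neg at hmem
        obtain ⟨w, hadj, hns⟩ := hmem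
        exact ⟨w, v, Walk.cons hadj.symm p,
          (Walk.cons_isPath_iff _ _).mpr ⟨hp, hns⟩, by simp [hl]⟩
  obtain ⟨u, v, p, hp, hl⟩ := key (Fintype.card V)
  have := hp.length_lt
  omega

lemma colourings_finite {V C : Type} [Fintype V] (G : SimpleGraph V) (L : V → Finset C) :
    Finite {φ : V → C // (∀ v, φ v ∈ L v) ∧ ∀ u w, G.Adj u w → φ u ≠ φ w} := by
  apply Finite.of_injective
    (fun φ : {φ : V → C // (∀ v, φ v ∈ L v) ∧ ∀ u w, G.Adj u w → φ u ≠ φ w} =>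
      (fun v => (⟨φ.1 v, φ.2.1 v⟩ : (L v : Finset C)) : ∀ v, (L v : Finset C)))
  intro φ ψ h
  apply Subtype.ext; funext v
  exact congrArg Subtype.val (congrFun h v)

lemma isAcyclic_induce {V : Type} {G : SimpleGraph V} (hG : G.IsAcyclic) (s : Set V) :
    (G.induce s).IsAcyclic := by
  intro v c hc
  exact hG _ ((Walk.map_isCycle_iff_of_injective (f := (SimpleGraph.Embedding.induce (G := G) s).toHom)
    (SimpleGraph.Embedding.induce (G := G) s).injective).mpr hc)


lemma step_count {V C : Type} [Fintype V] (G : SimpleGraph V) (L : V → Finset C)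
    (v : V) (hv : ∀ w₁ w₂, G.Adj v w₁ → G.Adj v w₂ → w₁ = w₂) (hL : ∀ u, 3 ≤ (L u).card) :
    2 * Nat.card {φ : ({w | w ≠ v} : Set V) → C //
        (∀ u, φ u ∈ L u.1) ∧ ∀ u w, (G.induce {w | w ≠ v}).Adj u w → φ u ≠ φ w} ≤
      Nat.card {φ : V → C // (∀ u, φ u ∈ L u) ∧ ∀ u w, G.Adj u w → φ u ≠ φ w} := by
  classical
  set Col' := {φ : ({w | w ≠ v} : Set V) → C //
      (∀ u, φ u ∈ L u.1) ∧ ∀ u w, (G.induce {w | w ≠ v}).Adj u w → φ u ≠ φ w} with hCol'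
  have : Finite Col' := colourings_finite _ _
  have : Fintype Col' := Fintype.ofFinite _
  have : Finite {φ : V → C // (∀ u, φ u ∈ L u) ∧ ∀ u w, G.Adj u w → φ u ≠ φ w} :=
    colourings_finite _ _
  set S : Col' → Finset C := fun ψ =>
    (L v).filter (fun c => ∀ w : ({w | w ≠ v} : Set V), G.Adj v w.1 → ψ.1 w ≠ c) with hS_def
  have hS : ∀ ψ, 2 ≤ (S ψ).card := by
    intro ψ
    by_cases hnb : ∃ w : ({w | w ≠ v} : Set V), G.Adj v w.1
    · obtain ⟨w₀, hw₀⟩ := hnb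
      have hsub : (L v) \ {ψ.1 w₀} ⊆ S ψ := by
        intro c hc
        rw [Finset.mem_sdiff, Finset.mem_singleton] at hc
        refine Finset.mem_filter.mpr ⟨hc.1, ?_⟩
        intro w hw
        have hww : w = w₀ := Subtype.ext (hv _ _ hw hw₀)
        rw [hww]
        exact fun he => hc.2 he.symm
      have h1 : (L v).card - ({ψ.1 w₀} : Finset C).card ≤ ((L v) \ {ψ.1 w₀}).card :=
        Finset.le_card_sdiff _ _
      rw [Finset.card_singleton] at h1
      have := hL v
      have := Finset.card_le_card hsub
      omega
    · push_neg at hnb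
      have hEq : S ψ = L v := by
        rw [hS_def]
        apply Finset.filter_true_of_mem
        intro c _ w hw
        exact absurd hw (hnb w)
      rw [hEq]
      have := hL v
      omega
  set F : (Σ ψ : Col', (S ψ : Finset C)) →
      {φ : V → C // (∀ u, φ u ∈ L u) ∧ ∀ u w, G.Adj u w → φ u ≠ φ w} := fun p =>
    ⟨fun w => if h : w = v then p.2.1 else p.1.1 ⟨w, h⟩, by
      intro u
      by_cases h : u = v
      · subst h; simp only [dif_pos]; exact (Finset.mem_filter.mp p.2.2).1
      · simp only [dif_neg h]; exact p.1.2.1 ⟨u, h⟩, by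
      intro u w huw
      by_cases hu : u = v <;> by_cases hw : w = v
      · subst hu; subst hw; exact absurd huw (G.irrefl)
      · subst hu
        simp only [dif_pos, dif_neg hw]
        exact fun he => (Finset.mem_filter.mp p.2.2).2 ⟨w, hw⟩ huw he.symm
      · subst hw
        simp only [dif_pos, dif_neg hu]
        exact (Finset.mem_filter.mp p.2.2).2 ⟨u, hu⟩ huw.symm
      · simp only [dif_neg hu, dif_neg hw]
        exact p.1.2.2 ⟨u, hu⟩ ⟨w, hw⟩ huw⟩ with hF_def
  have hFinj : Function.Injective F := by
    rintro ⟨ψ₁, c₁⟩ ⟨ψ₂, c₂⟩ h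
    have h' := congrArg Subtype.val h
    simp only [hF_def] at h'
    have hc : c₁.1 = c₂.1 := by
      have := congrFun h' v
      simpa using this
    have hψ : ψ₁ = ψ₂ := by
      apply Subtype.ext; funext w
      have := congrFun h' w.1
      have hwv : w.1 ≠ v := w.2
      rw [dif_neg hwv, dif_neg hwv] at this
      simpa using this
    subst hψ
    exact congrArg (Sigma.mk ψ₁) (Subtype.ext hc)
  calc 2 * Nat.card Col' = ∑ ψ : Col', 2 := by
        simp [Finset.sum_const, Nat.card_eq_fintype_card, Finset.card_univ, mul_comm]
    _ ≤ ∑ ψ : Col', (S ψ).card := Finset.sum_le_sum fun ψ _ => hS ψ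
    _ = Nat.card (Σ ψ : Col', (S ψ : Finset C)) := by
        rw [Nat.card_eq_fintype_card, Fintype.card_sigma]
        congr 1; funext ψ; exact (Fintype.card_coe _).symm
    _ ≤ _ := Nat.card_le_card_of_injective F hFinj

lemma aux_forest (n : ℕ) :
    ∀ (V C : Type) [Fintype V] (G : SimpleGraph V), G.IsAcyclic →
    Fintype.card V = n → 1 ≤ n → ∀ (L : V → Finset C), (∀ v, 3 ≤ (L v).card) →
    (3 : ℝ) ^ (((n : ℝ) + 1) / 2) ≤
      Nat.card {φ : V → C // (∀ v, φ v ∈ L v) ∧ ∀ u w, G.Adj u w → φ u ≠ φ w} := by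
  induction n using Nat.strong_induction_on with
  | _ n ih =>
    intro V C _ G hG hcard hn L hL
    classical
    have hfin := colourings_finite G L
    rcases eq_or_lt_of_le hn with h1 | h2
    · -- base case : n = 1
      obtain ⟨v0, hv0⟩ := Fintype.card_eq_one_iff.mp (hcard.trans h1.symm)
      set inj : {c : C // c ∈ L v0} →
          {φ : V → C // (∀ v, φ v ∈ L v) ∧ ∀ u w, G.Adj u w → φ u ≠ φ w} := fun c =>
        ⟨fun _ => c.1, fun u => by rw [hv0 u]; exact c.2, by
          intro u w huw
          have huv : u = w := (hv0 u).trans (hv0 w).symm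
          rw [huv] at huw
          exact absurd huw (G.irrefl)⟩ with hinj_def
      have hinj : Function.Injective inj := by
        intro c₁ c₂ h
        exact Subtype.ext (congrFun (congrArg Subtype.val h) v0)
      have h3 : 3 ≤ Nat.card
          {φ : V → C // (∀ v, φ v ∈ L v) ∧ ∀ u w, G.Adj u w → φ u ≠ φ w} := by
        calc (3 : ℕ) ≤ (L v0).card := hL v0
          _ = Nat.card {c : C // c ∈ L v0} := (Nat.card_eq_finsetCard _).symm
          _ ≤ _ := Nat.card_le_card_of_injective inj hinj
      rw [show (((n : ℝ)) + 1) / 2 = 1 by rw [← h1]; norm_num, Real.rpow_one]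
      exact_mod_cast h3
    · -- inductive step : n ≥ 2
      have hne : Nonempty V := Fintype.card_pos_iff.mp (by omega)
      obtain ⟨v, hv⟩ := exists_weak_leaf hG
      have hcard' : Fintype.card (({w | w ≠ v} : Set V)) = n - 1 := by
        have h' : Fintype.card ({w : V // ¬ w = v}) =
            Fintype.card V - Fintype.card {w : V // w = v} :=
          Fintype.card_subtype_compl _
        rw [Fintype.card_subtype_eq, hcard] at h'
        exact h'
      have hIH := ih (n - 1) (by omega) (({w | w ≠ v} : Set V)) C
        (G.induce {w | w ≠ v}) (isAcyclic_induce hG _) hcard' (by omega)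
        (fun w => L w.1) (fun w => hL w.1)
      have hc : (((n - 1 : ℕ) : ℝ) + 1) / 2 = (n : ℝ) / 2 := by
        have h : (n - 1) + 1 = n := by omega
        rw [show ((n - 1 : ℕ) : ℝ) + 1 = (((n - 1) + 1 : ℕ) : ℝ) by push_cast; ring, h]
      rw [hc] at hIH
      have hstep := step_count G L v hv hL
      calc (3 : ℝ) ^ (((n : ℝ) + 1) / 2)
          = 3 ^ ((1 : ℝ) / 2) * 3 ^ ((n : ℝ) / 2) := by
            rw [← Real.rpow_add (by norm_num)]; ring_nf
        _ ≤ 2 * 3 ^ ((n : ℝ) / 2) := by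
            gcongr
            rw [← Real.sqrt_eq_rpow]
            rw [show (2 : ℝ) = Real.sqrt 4 by
              rw [show (4 : ℝ) = 2 ^ 2 by norm_num, Real.sqrt_sq (by norm_num)]]
            exact Real.sqrt_le_sqrt (by norm_num)
        _ ≤ 2 * Nat.card {φ : ({w | w ≠ v} : Set V) → C //
              (∀ u, φ u ∈ L u.1) ∧
                ∀ u w, (G.induce {w | w ≠ v}).Adj u w → φ u ≠ φ w} := by
            have h2' : (0 : ℝ) ≤ 2 := by norm_num
            calc 2 * (3 : ℝ) ^ ((n : ℝ) / 2) ≤ 2 * _ := by gcongr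
              _ = _ := rfl
        _ ≤ _ := by exact_mod_cast hstep

/-- A forest `G` on `n ≥ 1` vertices with a list assignment `L` satisfying
`|L(v)| ≥ 3` for every vertex has at least `3^((n+1)/2)` distinct `L`-colourings. -/
theorem forest_many_list_colourings {V C : Type} [Fintype V] (G : SimpleGraph V)
    (hG : G.IsAcyclic) (hn : 1 ≤ Fintype.card V)
    (L : V → Finset C) (hL : ∀ v, 3 ≤ (L v).card) :
    (3 : ℝ) ^ (((Fintype.card V : ℝ) + 1) / 2) ≤
      Nat.card {φ : V → C // (∀ v, φ v ∈ L v) ∧ ∀ u w, G.Adj u w → φ u ≠ φ w} := by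
  exact aux_forest (Fintype.card V) V C G hG rfl hn L hL
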